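/- Let Γ ⊂ M be the semigroup generated by γ_1 = e_1, …, γ_d = e_d, γ_{d+1} = λ̄_1, …, γ_{d+g} = λ̄_g, and let γ_0 = Σ_{j=1}^g (n_j − 1) λ̄_j − Σ_{i=1}^d e_i. Then γ_0 is a Frobenius vector of Γ: for every α ∈ int(σ^∨) ∩ M (where σ^∨ = ℝ_{≥0}^d and M = ℤ^d + ℤλ_1 + ⋯ + ℤλ_g), the element γ_0 + α lies in Γ. -/

import Mathlib

open Finset

lemma auxZ {d : ℕ} {x : Fin d → ℚ}
    (hx : x ∈ AddSubgroup.closure (Set.range fun i : Fin d => (Pi.single i 1 : Fin d → ℚ))) :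
    ∀ i, ∃ m : ℤ, x i = m := by
  induction hx using AddSubgroup.closure_induction with
  | mem y hy =>
      obtain ⟨i, rfl⟩ := hy
      intro j
      by_cases h : i = j
      · subst h; exact ⟨1, by simp⟩
      · exact ⟨0, by simp [Pi.single_apply, h]⟩
  | zero => intro i; exact ⟨0, by simp⟩
  | add x y hx hy ihx ihy =>
      intro i
      obtain ⟨m, hm⟩ := ihx i; obtain ⟨m', hm'⟩ := ihy i
      exact ⟨m + m', by simp [hm, hm']⟩
  | neg x hx ihx =>
      intro i
      obtain ⟨m, hm⟩ := ihx i
      exact ⟨-m, by simp [hm]⟩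

lemma auxN {d : ℕ} {x : Fin d → ℚ} (hx : ∀ i, ∃ m : ℕ, x i = m) :
    x ∈ AddSubmonoid.closure (Set.range fun i : Fin d => (Pi.single i 1 : Fin d → ℚ)) := by
  have : x = ∑ i : Fin d, Pi.single i (x i) := by
    funext j; simp [Pi.single_apply]
  rw [this]
  refine sum_mem fun i _ => ?_
  obtain ⟨m, hm⟩ := hx i
  have : Pi.single i (x i) = m • (Pi.single i 1 : Fin d → ℚ) := by
    funext j; simp [Pi.single_apply, hm]
  rw [this]
  exact nsmul_mem (AddSubmonoid.subset_closure (Set.mem_range_self i)) m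

theorem stmt13 (d g : ℕ) (lam lamb : ℕ → (Fin d → ℚ)) (n : ℕ → ℕ)
    (Msub : ℕ → AddSubgroup (Fin d → ℚ))
    (hM : ∀ j, Msub j = AddSubgroup.closure
      ((Set.range fun i : Fin d => (Pi.single i 1 : Fin d → ℚ)) ∪
        (lam '' Set.Icc 1 j)))
    (hpos : ∀ j, 1 ≤ j → j ≤ g → ∀ i, 0 ≤ lam j i)
    (hchain : ∀ j, 1 ≤ j → j < g → lam j ≤ lam (j + 1) ∧ lam j ≠ lam (j + 1))
    (hn : ∀ j, 1 ≤ j → j ≤ g → 2 ≤ n j)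
    (hindex : ∀ j, 1 ≤ j → j ≤ g → (Msub (j - 1)).relIndex (Msub j) = n j)
    (hb1 : lamb 1 = lam 1)
    (hbrec : ∀ j, 1 ≤ j → j < g →
      lamb (j + 1) = (n j : ℚ) • lamb j + lam (j + 1) - lam j)
    (Γ : AddSubmonoid (Fin d → ℚ))
    (hΓ : Γ = AddSubmonoid.closure
      ((Set.range fun i : Fin d => (Pi.single i 1 : Fin d → ℚ)) ∪
        (lamb '' Set.Icc 1 g)))
    (γ0 : Fin d → ℚ)
    (hγ0 : γ0 = (∑ j ∈ Finset.Icc 1 g, ((n j : ℚ) - 1) • lamb j)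
      - ∑ i : Fin d, Pi.single i 1) :
    ∀ a : Fin d → ℚ, (∀ i, 0 < a i) → a ∈ Msub g → γ0 + a ∈ Γ := by
  set E : Set (Fin d → ℚ) := Set.range fun i : Fin d => (Pi.single i 1 : Fin d → ℚ) with hE
  set Γl : ℕ → AddSubmonoid (Fin d → ℚ) :=
    fun j => AddSubmonoid.closure (E ∪ lamb '' Set.Icc 1 j) with hΓl
  have hΓlmono : ∀ {j j' : ℕ}, j ≤ j' → Γl j ≤ Γl j' := by
    intro j j' h
    exact AddSubmonoid.closure_mono
      (Set.union_subset_union_right _ (Set.image_mono (Set.Icc_subset_Icc_right h)))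
  have hMmono : ∀ {j j' : ℕ}, j ≤ j' → Msub j ≤ Msub j' := by
    intro j j' h
    rw [hM j, hM j']
    exact AddSubgroup.closure_mono
      (Set.union_subset_union_right _ (Set.image_mono (Set.Icc_subset_Icc_right h)))
  have hlamMem : ∀ j, 1 ≤ j → lam j ∈ Msub j := by
    intro j hj
    rw [hM j]
    exact AddSubgroup.subset_closure (Or.inr ⟨j, ⟨hj, le_rfl⟩, rfl⟩)
  have hlambGen : ∀ j, 1 ≤ j → j ≤ g → lamb j ∈ Γl j :=
    fun j hj hjg => AddSubmonoid.subset_closure (Or.inr ⟨j, ⟨hj, le_rfl⟩, rfl⟩)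
  -- nonnegativity of lamb, and lamb j ≡ lam j mod Msub (j-1)
  have hQ : ∀ j, 1 ≤ j → j ≤ g → (∀ i, 0 ≤ lamb j i) ∧ lamb j - lam j ∈ Msub (j - 1) := by
    intro j hj
    induction j, hj using Nat.le_induction with
    | base =>
        intro h1g
        refine ⟨by rw [hb1]; exact hpos 1 le_rfl h1g, by rw [hb1, sub_self]; exact (Msub 0).zero_mem⟩
    | succ j hj ih =>
        intro hjg
        have hjg' : j ≤ g := by omega
        have hjlt : j < g := by omega
        obtain ⟨hnn, hmem⟩ := ih hjg'
        have hrec := hbrec j hj hjlt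
        have hch := (hchain j hj hjlt).1
        constructor
        · intro i
          rw [hrec]
          have h1 : (0:ℚ) ≤ (n j : ℚ) * lamb j i :=
            mul_nonneg (by positivity) (hnn i)
          have h2 : lam j i ≤ lam (j+1) i := hch i
          simp only [Pi.add_apply, Pi.sub_apply, Pi.smul_apply, smul_eq_mul]
          linarith
        · have hlambj : lamb j ∈ Msub j := by
            have h : lamb j = (lamb j - lam j) + lam j := by ring
            rw [h]
            exact AddSubgroup.add_mem _ (hMmono (Nat.sub_le j 1) hmem) (hlamMem j hj)
          have hns : (n j : ℚ) • lamb j = (n j : ℕ) • lamb j := by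
            rw [Nat.cast_smul_eq_nsmul]
          have h : lamb (j+1) - lam (j+1) = (n j : ℕ) • lamb j - lam j := by
            rw [hrec, ← hns]; ring
          rw [show j + 1 - 1 = j from rfl, h]
          exact AddSubgroup.sub_mem _ (AddSubgroup.nsmul_mem _ hlambj _) (hlamMem j hj)
  have hlambMem : ∀ j, 1 ≤ j → j ≤ g → lamb j ∈ Msub j := by
    intro j hj hjg
    have h : lamb j = (lamb j - lam j) + lam j := by ring
    rw [h]
    exact AddSubgroup.add_mem _ (hMmono (Nat.sub_le j 1) (hQ j hj hjg).2) (hlamMem j hj)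
  -- n j • lamb j ∈ Msub (j-1)
  have hnj : ∀ j, 1 ≤ j → j ≤ g → (n j : ℕ) • lamb j ∈ Msub (j - 1) := by
    intro j hj hjg
    have hidx : ((Msub (j-1)).addSubgroupOf (Msub j)).index = n j := hindex j hj hjg
    have h := AddSubgroup.nsmul_index_mem ((Msub (j-1)).addSubgroupOf (Msub j))
      (⟨lamb j, hlambMem j hj hjg⟩ : Msub j)
    rw [hidx, AddSubgroup.mem_addSubgroupOf] at h
    simpa using h
  -- decomposition
  have hdec : ∀ j, 1 ≤ j → ∀ x, x ∈ Msub j →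
      ∃ μ ∈ Msub (j-1), ∃ k : ℤ, x = μ + (k:ℚ) • lam j := by
    intro j hj x hx
    have hicc : lam '' Set.Icc 1 j = {lam j} ∪ lam '' Set.Icc 1 (j-1) := by
      have : Set.Icc 1 j = {j} ∪ Set.Icc 1 (j-1) := by
        ext m; simp only [Set.mem_Icc, Set.mem_union, Set.mem_singleton_iff]; omega
      rw [this, Set.image_union, Set.image_singleton]
    have hsup : Msub j = Msub (j-1) ⊔ AddSubgroup.closure {lam j} := by
      rw [hM j, hM (j-1), hicc, Set.union_comm ({lam j} : Set (Fin d → ℚ)),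
        ← Set.union_assoc, AddSubgroup.closure_union]
    rw [hsup, AddSubgroup.mem_sup] at hx
    obtain ⟨y, hy, z, hz, hxyz⟩ := hx
    rw [AddSubgroup.mem_closure_singleton] at hz
    obtain ⟨k, hk⟩ := hz
    refine ⟨y, hy, k, ?_⟩
    rw [← hxyz, ← hk, Int.cast_smul_eq_zsmul]
  -- reduction modulo n j
  have hred : ∀ j, 1 ≤ j → j ≤ g → ∀ x, x ∈ Msub j →
      ∃ c : ℕ, c < n j ∧ x - (c : ℚ) • lamb j ∈ Msub (j-1) := by
    intro j hj hjg x hx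
    obtain ⟨μ, hμ, k, hk⟩ := hdec j hj x hx
    have hlml : lamb j - lam j ∈ Msub (j-1) := (hQ j hj hjg).2
    have hnpos : (0:ℤ) < (n j : ℤ) := by have := hn j hj hjg; omega
    set q : ℤ := k / (n j : ℤ) with hq
    set r : ℤ := k % (n j : ℤ) with hr
    have hkqr : k = (n j : ℤ) * q + r := (Int.mul_ediv_add_emod k _).symm
    have hr0 : 0 ≤ r := Int.emod_nonneg k (by omega)
    have hrlt : r < (n j : ℤ) := Int.emod_lt_of_pos k hnpos
    refine ⟨r.toNat, by omega, ?_⟩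
    have hcast : ((r.toNat : ℕ) : ℚ) = (r : ℚ) := by
      exact_mod_cast Int.toNat_of_nonneg hr0
    rw [hcast]
    have hkQ : (k : ℚ) = (n j : ℚ) * (q:ℚ) + (r:ℚ) := by exact_mod_cast hkqr
    have heq : x - (r:ℚ) • lamb j
        = (μ - (k:ℚ) • (lamb j - lam j)) + (q:ℚ) • ((n j : ℚ) • lamb j) := by
      rw [hk]
      match_scalars <;> first | ring1 | linear_combination hkQ | linear_combination -hkQ
    rw [heq]
    refine AddSubgroup.add_mem _ (AddSubgroup.sub_mem _ hμ ?_) ?_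
    · have h := AddSubgroup.zsmul_mem _ hlml k
      rwa [← Int.cast_smul_eq_zsmul ℚ] at h
    · have h := AddSubgroup.zsmul_mem _ (hnj j hj hjg) q
      rwa [← Int.cast_smul_eq_zsmul ℚ, ← Nat.cast_smul_eq_nsmul ℚ] at h
  -- main induction
  have P : ∀ j, j ≤ g → ∀ a : Fin d → ℚ, (∀ i, 0 < a i) → a ∈ Msub j →
      ((∑ k ∈ Finset.Icc 1 j, ((n k : ℚ) - 1) • lamb k) - ∑ i : Fin d, Pi.single i 1) + a
        ∈ Γl j := by
    intro j
    induction j with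
    | zero =>
        intro _ a ha hmem
        have hmem' : a ∈ AddSubgroup.closure E := by
          rw [hM 0] at hmem
          simpa using hmem
        have hcoord := auxZ hmem'
        have hS : ∀ i, (∑ i : Fin d, (Pi.single i 1 : Fin d → ℚ)) i = 1 := by
          intro i
          simp [Finset.sum_apply, Pi.single_apply]
        have heq : ((∑ k ∈ Finset.Icc 1 0, ((n k : ℚ) - 1) • lamb k)
            - ∑ i : Fin d, Pi.single i 1) + a = a - ∑ i : Fin d, Pi.single i 1 := by
          rw [show Finset.Icc 1 0 = (∅ : Finset ℕ) from rfl, Finset.sum_empty]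
          ring
        rw [heq]
        have : a - (∑ i : Fin d, (Pi.single i 1 : Fin d → ℚ)) ∈ AddSubmonoid.closure E := by
          apply auxN
          intro i
          obtain ⟨m, hm⟩ := hcoord i
          have hm1 : 1 ≤ m := by
            have := ha i
            rw [hm] at this
            exact_mod_cast this
          refine ⟨(m - 1).toNat, ?_⟩
          have h2 : (((m - 1).toNat : ℕ) : ℚ) = ((m : ℚ) - 1) := by
            have h := Int.toNat_of_nonneg (by omega : (0:ℤ) ≤ m - 1)
            exact_mod_cast h
          rw [Pi.sub_apply, hm, hS i, h2]
        exact AddSubmonoid.closure_mono Set.subset_union_left this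
    | succ j ih =>
        intro hjg a ha hmem
        have hj1 : 1 ≤ j + 1 := by omega
        obtain ⟨c, hclt, hc⟩ := hred (j+1) hj1 hjg a hmem
        have hgen : lamb (j+1) ∈ Γl (j+1) := hlambGen (j+1) hj1 hjg
        have hnn := (hQ (j+1) hj1 hjg).1
        have hsum : (∑ k ∈ Finset.Icc 1 (j+1), ((n k : ℚ) - 1) • lamb k)
            = (∑ k ∈ Finset.Icc 1 j, ((n k : ℚ) - 1) • lamb k)
              + ((n (j+1) : ℚ) - 1) • lamb (j+1) :=
          Finset.sum_Icc_succ_top (by omega) _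
        rcases Nat.eq_zero_or_pos c with hc0 | hc1
        · -- c = 0 : a ∈ Msub j
          subst hc0
          simp only [Nat.cast_zero, zero_smul, sub_zero] at hc
          have hprev := ih (by omega) a ha hc
          have hn2 := hn (j+1) hj1 hjg
          have ht : ((n (j+1) : ℚ) - 1) • lamb (j+1) ∈ Γl (j+1) := by
            have : ((n (j+1) : ℚ) - 1) = ((n (j+1) - 1 : ℕ) : ℚ) := by
              push_cast [Nat.cast_sub (by omega : 1 ≤ n (j+1))]
              ring
            rw [this, Nat.cast_smul_eq_nsmul]
            exact nsmul_mem hgen _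
          have heq : ((∑ k ∈ Finset.Icc 1 (j+1), ((n k : ℚ) - 1) • lamb k)
              - ∑ i : Fin d, Pi.single i 1) + a
              = (((∑ k ∈ Finset.Icc 1 j, ((n k : ℚ) - 1) • lamb k)
                - ∑ i : Fin d, Pi.single i 1) + a) + ((n (j+1) : ℚ) - 1) • lamb (j+1) := by
            rw [hsum]; ring
          rw [heq]
          exact AddSubmonoid.add_mem _ (hΓlmono (by omega) hprev) ht
        · -- c ≥ 1
          set a' : Fin d → ℚ := a + ((n (j+1) : ℚ) - (c:ℚ)) • lamb (j+1) with ha'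
          have hcn : (c : ℚ) < (n (j+1) : ℚ) := by exact_mod_cast hclt
          have ha'mem : a' ∈ Msub j := by
            have h2 := hnj (j+1) hj1 hjg
            have heq2 : a' = (a - (c:ℚ) • lamb (j+1)) + ((n (j+1) : ℕ) • lamb (j+1)) := by
              rw [ha', ← Nat.cast_smul_eq_nsmul ℚ (n (j+1))]
              match_scalars <;> ring
            rw [heq2]
            exact AddSubgroup.add_mem _ hc h2
          have ha'pos : ∀ i, 0 < a' i := by
            intro i
            have h1 := ha i
            have h2 := hnn i
            have h3 : (0:ℚ) ≤ ((n (j+1) : ℚ) - (c:ℚ)) * lamb (j+1) i :=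
              mul_nonneg (by linarith) h2
            simp only [ha', Pi.add_apply, Pi.smul_apply, smul_eq_mul]
            linarith
          have hprev := ih (by omega) a' ha'pos ha'mem
          have hc1Q : (1:ℚ) ≤ (c:ℚ) := by exact_mod_cast hc1
          have ht : ((c:ℚ) - 1) • lamb (j+1) ∈ Γl (j+1) := by
            have : ((c:ℚ) - 1) = ((c - 1 : ℕ) : ℚ) := by
              push_cast [Nat.cast_sub (by omega : 1 ≤ c)]
              ring
            rw [this, Nat.cast_smul_eq_nsmul]
            exact nsmul_mem hgen _
          have heq : ((∑ k ∈ Finset.Icc 1 (j+1), ((n k : ℚ) - 1) • lamb k)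
              - ∑ i : Fin d, Pi.single i 1) + a
              = (((∑ k ∈ Finset.Icc 1 j, ((n k : ℚ) - 1) • lamb k)
                - ∑ i : Fin d, Pi.single i 1) + a') + ((c:ℚ) - 1) • lamb (j+1) := by
            rw [hsum, ha']
            match_scalars <;> ring
          rw [heq]
          exact AddSubmonoid.add_mem _ (hΓlmono (by omega) hprev) ht
  intro a ha hmem
  rw [hγ0, hΓ]
  exact P g le_rfl a ha hmem
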